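/- For every σ with 0 ≤ σ ≤ 2π, ∫_0^∞ e^{−u} (1 + σ² u²)^{−1/4} du ≤ exp(−σ²/700). -/

import Mathlib

open MeasureTheory Real

lemma aux_poly (x : ℝ) (hx0 : 0 ≤ x) (hx : x ≤ 40) :
    (1 + x / 27) ^ (4:ℕ) ≤ 1 + x := by
  nlinarith [mul_nonneg hx0 hx0, mul_nonneg (mul_nonneg hx0 hx0) hx0,
    mul_nonneg hx0 (sub_nonneg.2 hx), mul_nonneg (mul_nonneg hx0 hx0) (sub_nonneg.2 hx),
    mul_nonneg (mul_nonneg (mul_nonneg hx0 hx0) hx0) (sub_nonneg.2 hx)]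

lemma aux_rpow (x : ℝ) (hx0 : 0 ≤ x) (hx : x ≤ 40) :
    (1 + x) ^ (-(1/4) : ℝ) ≤ 1 - x / 67 := by
  have h1 : (0:ℝ) < 1 + x / 27 := by linarith
  have h2 : (1 + x / 27) ≤ (1 + x) ^ ((1/4) : ℝ) := by
    have := Real.rpow_le_rpow (by positivity) (aux_poly x hx0 hx) (by norm_num : (0:ℝ) ≤ 1/4)
    calc (1 + x / 27) = (((1 + x / 27) ^ (4:ℕ)) : ℝ) ^ ((1/4):ℝ) := by
          rw [← Real.rpow_natCast (1 + x/27) 4, ← Real.rpow_mul (le_of_lt h1)]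
          norm_num
      _ ≤ (1 + x) ^ ((1/4):ℝ) := this
  have h3 : (1 + x) ^ (-(1/4) : ℝ) = ((1 + x) ^ ((1/4) : ℝ))⁻¹ := by
    rw [Real.rpow_neg (by linarith)]
  rw [h3]
  have h4 : ((1 + x) ^ ((1/4) : ℝ))⁻¹ ≤ (1 + x / 27)⁻¹ :=
    inv_anti₀ h1 h2
  have h5 : (1 + x / 27)⁻¹ ≤ 1 - x / 67 := by
    rw [inv_le_iff_one_le_mul₀ h1]  -- maybe wrong name
    nlinarith
  linarith

theorem stmt16 (σ : ℝ) (hσ0 : 0 ≤ σ) (hσ : σ ≤ 2 * π) :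
    ∫ u in Set.Ioi (0:ℝ), Real.exp (-u) * (1 + σ^2 * u^2) ^ (-(1/4) : ℝ)
      ≤ Real.exp (-σ^2 / 700) := by
  have hπ : π < 3.15 := by
    have := Real.pi_lt_d2
    linarith
  have hσ40 : σ^2 ≤ 40 := by nlinarith
  set f : ℝ → ℝ := fun u => Real.exp (-u) * (1 + σ^2 * u^2) ^ (-(1/4) : ℝ) with hf
  set g : ℝ → ℝ := fun u => Real.exp (-u) - (Set.Icc (1:ℝ) 2).indicator (fun _ => σ^2/700) u with hg
  -- integrability
  have hcont : Continuous f := by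
    apply Continuous.mul (by continuity)
    apply Continuous.rpow_const (by continuity)
    intro u
    left
    positivity
  have hexp_int : IntegrableOn (fun u => Real.exp (-u)) (Set.Ioi (0:ℝ)) := by
    simpa using exp_neg_integrableOn_Ioi 0 (by norm_num : (0:ℝ) < 1)
  have hf_int : IntegrableOn f (Set.Ioi (0:ℝ)) := by
    apply hexp_int.mono' hcont.aestronglyMeasurable
    filter_upwards with u
    rw [Real.norm_eq_abs, abs_of_nonneg (by positivity)]
    have : (1 + σ^2 * u^2) ^ (-(1/4) : ℝ) ≤ 1 :=
      Real.rpow_le_one_of_one_le_of_nonpos (by nlinarith [sq_nonneg (σ*u)]) (by norm_num)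
    calc f u ≤ Real.exp (-u) * 1 := by
          apply mul_le_mul_of_nonneg_left this (le_of_lt (Real.exp_pos _))
      _ = Real.exp (-u) := mul_one _
  have hind_int : IntegrableOn (fun u => (Set.Icc (1:ℝ) 2).indicator (fun _ => σ^2/700) u) (Set.Ioi (0:ℝ)) := by
    apply Integrable.integrableOn
    rw [integrable_indicator_iff measurableSet_Icc]
    exact integrableOn_const (by simp [Real.volume_Icc])
  have hg_int : IntegrableOn g (Set.Ioi (0:ℝ)) := hexp_int.sub hind_int
  -- pointwise bound
  have hfg : ∀ u ∈ Set.Ioi (0:ℝ), f u ≤ g u := by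
    intro u hu
    simp only [Set.mem_Ioi] at hu
    by_cases h12 : u ∈ Set.Icc (1:ℝ) 2
    · have hu1 : 1 ≤ u := h12.1
      have hu2 : u ≤ 2 := h12.2
      have hbase : (1:ℝ) ≤ 1 + σ^2 * u^2 := by nlinarith [sq_nonneg (σ*u)]
      have hmono : (1 + σ^2 * u^2) ^ (-(1/4) : ℝ) ≤ (1 + σ^2) ^ (-(1/4) : ℝ) := by
        apply Real.rpow_le_rpow_of_nonpos (by positivity)
          (by nlinarith [mul_nonneg (sq_nonneg σ) (mul_nonneg (sub_nonneg.2 hu1) (by linarith : (0:ℝ) ≤ u + 1))])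
          (by norm_num)
      have hkey : (1 + σ^2) ^ (-(1/4) : ℝ) ≤ 1 - σ^2/67 :=
        aux_rpow (σ^2) (sq_nonneg σ) hσ40
      have hexp2 : Real.exp (-u) ≥ Real.exp (-2) := Real.exp_le_exp.2 (by linarith)
      have hexp2lt : Real.exp (2:ℝ) < 7.39 := by
        have h := Real.exp_one_lt_d9
        calc Real.exp (2:ℝ) = Real.exp 1 * Real.exp 1 := by rw [← Real.exp_add]; norm_num
          _ < 7.39 := by nlinarith [Real.exp_pos 1]
      have he2 : (1:ℝ)/7.39 ≤ Real.exp (-2) := by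
        rw [Real.exp_neg, div_le_iff₀ (by norm_num : (0:ℝ) < 7.39), inv_mul_eq_div,
          le_div_iff₀ (Real.exp_pos 2), one_mul]
        linarith
      have hfu : f u ≤ Real.exp (-u) * (1 - σ^2/67) := by
        apply mul_le_mul_of_nonneg_left (le_trans hmono hkey) (le_of_lt (Real.exp_pos _))
      have h700 : σ^2/700 ≤ Real.exp (-u) * (σ^2/67) := by
        have : (1:ℝ)/7.39 * (σ^2/67) ≤ Real.exp (-u) * (σ^2/67) := by
          apply mul_le_mul_of_nonneg_right (le_trans he2 hexp2) (by positivity)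
        nlinarith [sq_nonneg σ]
      simp only [hg, Set.indicator_of_mem h12]
      nlinarith [Real.exp_pos (-u)]
    · simp only [hg, Set.indicator_of_notMem h12, sub_zero]
      have : (1 + σ^2 * u^2) ^ (-(1/4) : ℝ) ≤ 1 :=
        Real.rpow_le_one_of_one_le_of_nonpos (by nlinarith [sq_nonneg (σ*u)]) (by norm_num)
      calc f u ≤ Real.exp (-u) * 1 :=
            mul_le_mul_of_nonneg_left this (le_of_lt (Real.exp_pos _))
        _ = Real.exp (-u) := mul_one _
  have hle : ∫ u in Set.Ioi (0:ℝ), f u ≤ ∫ u in Set.Ioi (0:ℝ), g u :=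
    setIntegral_mono_on hf_int hg_int measurableSet_Ioi hfg
  have hgval : ∫ u in Set.Ioi (0:ℝ), g u = 1 - σ^2/700 := by
    rw [hg]
    rw [integral_sub hexp_int hind_int]
    rw [integral_exp_neg_Ioi_zero]
    rw [setIntegral_indicator measurableSet_Icc]
    have : Set.Ioi (0:ℝ) ∩ Set.Icc 1 2 = Set.Icc 1 2 := by
      apply Set.inter_eq_self_of_subset_right
      intro x hx
      simp only [Set.mem_Ioi]
      linarith [hx.1]
    rw [this, setIntegral_const]
    simp [Real.volume_Icc]
    norm_num
  have hfinal : 1 - σ^2/700 ≤ Real.exp (-σ^2/700) := by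
    have := Real.add_one_le_exp (-σ^2/700)
    linarith
  calc ∫ u in Set.Ioi (0:ℝ), f u ≤ ∫ u in Set.Ioi (0:ℝ), g u := hle
    _ = 1 - σ^2/700 := hgval
    _ ≤ Real.exp (-σ^2/700) := hfinal
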